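/- Let f : ℝ → ℝ, ω ∈ ℝ, and let α, β be real numbers with 0 < β < α. Suppose there exists L ∈ ℝ with L ≠ 0 such that (f(x) − f(ω))/(x − ω)^β tends to L as x tends to ω from the right (i.e. along the filter 𝓝[>] ω). Then there is no real number M such that (f(x) − f(ω))/(x − ω)^α tends to M as x tends to ω along 𝓝[>] ω. -/

import Mathlib

open Filter Topology

theorem alpha_omega_deriv_at_omega_gt (f : ℝ → ℝ) (ω α β L : ℝ)
    (hβ : 0 < β) (hβα : β < α) (hL : L ≠ 0)
    (h : Tendsto (fun x => (f x - f ω) / (x - ω) ^ β) (𝓝[>] ω) (𝓝 L)) :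
    ¬ ∃ M : ℝ, Tendsto (fun x => (f x - f ω) / (x - ω) ^ α) (𝓝[>] ω) (𝓝 M) := by
  rintro ⟨M, hM⟩
  have hpow : Tendsto (fun x : ℝ => (x - ω) ^ (α - β)) (𝓝[>] ω) (𝓝 0) := by
    have h1 : Tendsto (fun x : ℝ => x - ω) (𝓝[>] ω) (𝓝 0) := by
      have : Tendsto (fun x : ℝ => x - ω) (𝓝 ω) (𝓝 (ω - ω)) :=
        (continuous_id.sub continuous_const).tendsto ω
      simpa using this.mono_left nhdsWithin_le_nhds
    have h2 : ContinuousAt (fun y : ℝ => y ^ (α - β)) 0 :=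
      Real.continuousAt_rpow_const 0 (α - β) (Or.inr (by linarith))
    have := h2.tendsto.comp h1
    simpa [Function.comp_def, Real.zero_rpow (by linarith : α - β ≠ 0)] using this
  have hmul : Tendsto (fun x => (f x - f ω) / (x - ω) ^ α * (x - ω) ^ (α - β))
      (𝓝[>] ω) (𝓝 (M * 0)) := hM.mul hpow
  have heq : (fun x => (f x - f ω) / (x - ω) ^ α * (x - ω) ^ (α - β)) =ᶠ[𝓝[>] ω]
      (fun x => (f x - f ω) / (x - ω) ^ β) := by
    filter_upwards [self_mem_nhdsWithin] with x hx
    have hx' : (0:ℝ) < x - ω := sub_pos.mpr hx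
    have hβne : (x - ω) ^ β ≠ 0 := (Real.rpow_pos_of_pos hx' β).ne'
    have hαne : (x - ω) ^ α ≠ 0 := (Real.rpow_pos_of_pos hx' α).ne'
    have hsplit : (x - ω) ^ α = (x - ω) ^ β * (x - ω) ^ (α - β) := by
      rw [← Real.rpow_add hx']; ring_nf
    field_simp [hsplit]
    rw [hsplit]; ring
  have : Tendsto (fun x => (f x - f ω) / (x - ω) ^ β) (𝓝[>] ω) (𝓝 (M * 0)) :=
    hmul.congr' heq
  have hne : (𝓝[>] ω).NeBot := inferInstance
  have := tendsto_nhds_unique this h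
  simp at this
  exact hL this.symm
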